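/- Let z₁, …, zₙ be distinct complex numbers, let σ₁, …, σₙ be real numbers satisfying the neutrality condition σ₁ + ⋯ + σₙ = −2, and set λⱼ = σⱼ² + 2σⱼ for each j. Let M(z) = (az + b)/(cz + d) be a Möbius transformation with ad − bc = 1 and c·zⱼ + d ≠ 0 for all j. Then ∏_{j<k} |M(zⱼ) − M(z_k)|^{2σⱼσ_k} · ∏_j |c·zⱼ + d|^{−2λⱼ} = ∏_{j<k} |zⱼ − z_k|^{2σⱼσ_k}. Equivalently, since |M′(zⱼ)| = |c·zⱼ + d|^{−2}, the quantity ∏_{j<k} |M(zⱼ) − M(z_k)|^{2σⱼσ_k} · ∏_j |M′(zⱼ)|^{λⱼ} equals ∏_{j<k} |zⱼ − z_k|^{2σⱼσ_k}; that is, the modulus of the normalized Coulomb gas correlation is Möbius invariant as a differential of conformal dimension λⱼ at zⱼ. -/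

import Mathlib

open Finset

private theorem pair_sum_aux (n : ℕ) (σ L : Fin n → ℝ) :
    ∑ j, ∑ k ∈ Ioi j, σ j * σ k * (L j + L k)
      = ∑ j, σ j * L j * ((∑ k, σ k) - σ j) := by
  have hsum : ∀ j : Fin n, (∑ k ∈ Ioi j, σ k) + ∑ k ∈ Iio j, σ k = (∑ k, σ k) - σ j := by
    intro j
    have hu : Ioi j ∪ Iio j = ({j} : Finset (Fin n))ᶜ := by
      ext x; simp [lt_or_lt_iff_ne, ne_comm, eq_comm]
    have hd : Disjoint (Ioi j) (Iio j) := by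
      simp only [Finset.disjoint_left, mem_Ioi, mem_Iio]
      intro x h1 h2; exact absurd (h1.trans h2) (lt_irrefl _)
    rw [← Finset.sum_union hd, hu]
    have := Finset.sum_compl_add_sum ({j} : Finset (Fin n)) σ
    simp only [Finset.sum_singleton] at this
    linarith
  have swap : ∑ j, ∑ k ∈ Ioi j, σ j * σ k * L k
      = ∑ k, ∑ j ∈ Iio k, σ j * σ k * L k :=
    Finset.sum_comm' (by simp)
  calc ∑ j, ∑ k ∈ Ioi j, σ j * σ k * (L j + L k)
      = ∑ j, ((∑ k ∈ Ioi j, σ j * σ k * L j) + ∑ k ∈ Ioi j, σ j * σ k * L k) := by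
        refine Finset.sum_congr rfl fun j _ => ?_
        rw [← Finset.sum_add_distrib]
        exact Finset.sum_congr rfl fun k _ => by ring
    _ = (∑ j, σ j * L j * ∑ k ∈ Ioi j, σ k) + ∑ j, σ j * L j * ∑ k ∈ Iio j, σ k := by
        rw [Finset.sum_add_distrib, swap]
        congr 1
        · refine Finset.sum_congr rfl fun j _ => ?_
          rw [Finset.mul_sum]; exact Finset.sum_congr rfl fun k _ => by ring
        · refine Finset.sum_congr rfl fun k _ => ?_
          rw [Finset.mul_sum]; exact Finset.sum_congr rfl fun j _ => by ring
    _ = ∑ j, σ j * L j * ((∑ k, σ k) - σ j) := by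
        rw [← Finset.sum_add_distrib]
        refine Finset.sum_congr rfl fun j _ => ?_
        rw [← hsum j]; ring


/-- Möbius invariance of the modulus of the normalized Coulomb gas
correlation: for distinct points `z j`, real charges `σ j` with `∑ σ j = -2`
(neutrality), conformal dimensions `lam j = σ j ^ 2 + 2 σ j`, and a normalized Möbius
transformation `M(z) = (a z + b)/(c z + d)` with `a d - b c = 1` whose pole avoids the
`z j`, one has
`∏_{j<k} |M z_j - M z_k| ^ (2 σ_j σ_k) ⬝ ∏_j |c z_j + d| ^ (-(2 lam_j))
  = ∏_{j<k} |z_j - z_k| ^ (2 σ_j σ_k)`,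
and equivalently, `∏_{j<k} |M z_j - M z_k| ^ (2 σ_j σ_k) ⬝ ∏_j |M' (z_j)| ^ (lam_j)`
equals the same right-hand side. (Powers are real powers of nonnegative reals.) -/
theorem coulomb_gas_modulus_mobius_invariant (n : ℕ) (z : Fin n → ℂ)
    (hz : Function.Injective z)
    (σ : Fin n → ℝ) (hσ : ∑ j, σ j = -2)
    (lam : Fin n → ℝ) (hlam : ∀ j, lam j = σ j ^ 2 + 2 * σ j)
    (a b c d : ℂ) (habcd : a * d - b * c = 1)
    (M : ℂ → ℂ) (hM : ∀ w, M w = (a * w + b) / (c * w + d))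
    (hden : ∀ j, c * z j + d ≠ 0) :
    (∏ j, ∏ k ∈ Ioi j, ‖M (z j) - M (z k)‖ ^ (2 * σ j * σ k)) *
        (∏ j, ‖c * z j + d‖ ^ (-(2 * lam j))) =
      (∏ j, ∏ k ∈ Ioi j, ‖z j - z k‖ ^ (2 * σ j * σ k)) ∧
    (∏ j, ∏ k ∈ Ioi j, ‖M (z j) - M (z k)‖ ^ (2 * σ j * σ k)) *
        (∏ j, ‖deriv M (z j)‖ ^ (lam j)) =
      ∏ j, ∏ k ∈ Ioi j, ‖z j - z k‖ ^ (2 * σ j * σ k) := by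
  have hMfun : M = fun w => (a * w + b) / (c * w + d) := funext hM
  -- abbreviations
  set A : Fin n → ℝ := fun j => ‖c * z j + d‖ with hA
  have hApos : ∀ j, 0 < A j := fun j => by
    simpa [hA] using (norm_pos_iff.mpr (hden j))
  set L : Fin n → ℝ := fun j => Real.log (A j) with hL
  set G : Fin n → Fin n → ℝ := fun j k => Real.log (‖z j - z k‖) with hG
  have hzpos : ∀ j k : Fin n, j ≠ k → 0 < ‖z j - z k‖ := by
    intro j k hjk
    exact norm_pos_iff.mpr (sub_ne_zero.mpr fun h => hjk (hz h))
  -- key difference formula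
  have hdiff : ∀ j k : Fin n,
      ‖M (z j) - M (z k)‖ = ‖z j - z k‖ / (A j * A k) := by
    intro j k
    have : M (z j) - M (z k) = (z j - z k) / ((c * z j + d) * (c * z k + d)) := by
      have h1 := hden j; have h2 := hden k
      rw [hM, hM]
      rw [div_sub_div _ _ h1 h2, div_left_inj' (mul_ne_zero h1 h2)]
      linear_combination (z j - z k) * habcd
    rw [this, norm_div, norm_mul]
  -- derivative formula
  have hderiv : ∀ j, ‖deriv M (z j)‖ = (A j ^ 2)⁻¹ := by
    intro j
    have h : HasDerivAt (fun w => (a * w + b) / (c * w + d))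
        ((a * 1 * (c * id (z j) + d) - (a * id (z j) + b) * (c * 1)) /
          (c * id (z j) + d) ^ 2) (z j) :=
      ((hasDerivAt_id (z j)).const_mul a |>.add_const b).div
        (((hasDerivAt_id (z j)).const_mul c).add_const d) (hden j)
    rw [hMfun, h.deriv]
    simp only [id]
    have h1 : a * 1 * (c * z j + d) - (a * z j + b) * (c * 1) = 1 := by
      linear_combination habcd
    rw [div_eq_inv_mul, h1, mul_one, norm_inv, norm_pow]
  -- the two correction products coincide
  have hsame : (∏ j, ‖deriv M (z j)‖ ^ (lam j))
      = ∏ j, A j ^ (-(2 * lam j)) := by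
    refine Finset.prod_congr rfl fun j _ => ?_
    rw [hderiv j, ← Real.rpow_natCast (A j) 2, ← Real.rpow_neg (hApos j).le,
      ← Real.rpow_mul (hApos j).le]
    congr 1
    push_cast
    ring
  -- main first identity via logarithms
  have main : (∏ j, ∏ k ∈ Ioi j, ‖M (z j) - M (z k)‖ ^ (2 * σ j * σ k)) *
      (∏ j, A j ^ (-(2 * lam j))) =
      ∏ j, ∏ k ∈ Ioi j, ‖z j - z k‖ ^ (2 * σ j * σ k) := by
    have e1 : ∀ j : Fin n, ∀ k ∈ Ioi j,
        ‖M (z j) - M (z k)‖ ^ (2 * σ j * σ k)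
          = Real.exp ((G j k - L j - L k) * (2 * σ j * σ k)) := by
      intro j k hk
      have hjk : j ≠ k := ne_of_lt (mem_Ioi.mp hk)
      have hpos : 0 < ‖M (z j) - M (z k)‖ := by
        rw [hdiff]
        exact div_pos (hzpos j k hjk) (mul_pos (hApos j) (hApos k))
      rw [Real.rpow_def_of_pos hpos, hdiff j k, Real.log_div (hzpos j k hjk).ne'
        (mul_pos (hApos j) (hApos k)).ne', Real.log_mul (hApos j).ne' (hApos k).ne']
      ring_nf
      congr 1; simp only [hG, hL]; ring
    have e2 : ∀ j : Fin n, ∀ k ∈ Ioi j,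
        ‖z j - z k‖ ^ (2 * σ j * σ k)
          = Real.exp (G j k * (2 * σ j * σ k)) := by
      intro j k hk
      rw [Real.rpow_def_of_pos (hzpos j k (ne_of_lt (mem_Ioi.mp hk)))]
    have e3 : ∀ j : Fin n, A j ^ (-(2 * lam j)) = Real.exp (L j * (-(2 * lam j))) := by
      intro j; rw [Real.rpow_def_of_pos (hApos j)]
    calc (∏ j, ∏ k ∈ Ioi j, ‖M (z j) - M (z k)‖ ^ (2 * σ j * σ k)) *
          (∏ j, A j ^ (-(2 * lam j)))
        = Real.exp ((∑ j, ∑ k ∈ Ioi j, (G j k - L j - L k) * (2 * σ j * σ k))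
            + ∑ j, L j * (-(2 * lam j))) := by
          rw [Real.exp_add, Real.exp_sum, Real.exp_sum]
          congr 1
          · exact Finset.prod_congr rfl fun j _ => by
              rw [Real.exp_sum]; exact Finset.prod_congr rfl (e1 j)
          · exact Finset.prod_congr rfl fun j _ => e3 j
      _ = Real.exp (∑ j, ∑ k ∈ Ioi j, G j k * (2 * σ j * σ k)) := by
          congr 1
          have hps := pair_sum_aux n σ L
          rw [hσ] at hps
          have split : ∑ j, ∑ k ∈ Ioi j, (G j k - L j - L k) * (2 * σ j * σ k)
              = (∑ j, ∑ k ∈ Ioi j, G j k * (2 * σ j * σ k))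
                - 2 * ∑ j, ∑ k ∈ Ioi j, σ j * σ k * (L j + L k) := by
            rw [Finset.mul_sum, ← Finset.sum_sub_distrib]
            refine Finset.sum_congr rfl fun j _ => ?_
            rw [Finset.mul_sum, ← Finset.sum_sub_distrib]
            exact Finset.sum_congr rfl fun k _ => by ring
          rw [split, hps]
          have : ∑ j, L j * (-(2 * lam j)) = 2 * ∑ j, σ j * L j * (-2 - σ j) := by
            rw [Finset.mul_sum]
            refine Finset.sum_congr rfl fun j _ => ?_
            rw [hlam j]; ring
          rw [this]; ring
      _ = ∏ j, ∏ k ∈ Ioi j, ‖z j - z k‖ ^ (2 * σ j * σ k) := by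
          rw [Real.exp_sum]
          refine Finset.prod_congr rfl fun j _ => ?_
          rw [Real.exp_sum]
          exact Finset.prod_congr rfl fun k hk => (e2 j k hk).symm
  exact ⟨main, by rw [hsame]; exact main⟩
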